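/- Let G be a bipartite graph and G^e an orientation of G with skew adjacency matrix A(G^e). Then per(xI − A(G)) = det(xI − A(G^e)) holds if and only if every cycle of G is oddly oriented in G^e. -/

import Mathlib

/-- An orientation of a simple graph `G`, encoded by its skew adjacency matrix entries:
`sign u v = 1` if the edge `uv` is directed from `u` to `v`, `-1` if it is directed
from `v` to `u`, and `0` if `uv` is not an edge. -/
structure SimpleGraph.Orientation {V : Type*} (G : SimpleGraph V) where
  sign : V → V → ℤ
  skew : ∀ u v, sign u v = - sign v u
  adj : ∀ u v, G.Adj u v → sign u v = 1 ∨ sign u v = -1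
  not_adj : ∀ u v, ¬ G.Adj u v → sign u v = 0

/-- A closed walk is oddly oriented if an odd number of its edges are directed in
agreement with the traversal direction of the walk. -/
def SimpleGraph.Orientation.OddlyOriented {V : Type*} {G : SimpleGraph V}
    (o : G.Orientation) {v : V} (c : G.Walk v v) : Prop :=
  Odd ((c.darts.filter (fun d => o.sign d.toProd.1 d.toProd.2 = 1)).length)

open Equiv Equiv.Perm Polynomial

section Aux
variable {V : Type*} {G : SimpleGraph V}

/-- parity of walk lengths under a 2-coloring -/
lemma walk_parity (C : G.Coloring (Fin 2)) {u w : V} (p : G.Walk u w) :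
    ((p.length : ZMod 2) + (C w).val = (C u).val) := by
  induction p with
  | nil => simp
  | @cons u v w h q ih =>
    have hne : C u ≠ C v := C.valid h
    have : ((C u).val : ZMod 2) = (C v).val + 1 := by
      revert hne; generalize C u = a; generalize C v = b; revert a b; decide
    simp only [SimpleGraph.Walk.length_cons, Nat.cast_add, Nat.cast_one, this]
    rw [← ih]; ring

lemma closed_walk_even (hbip : G.Colorable 2) {v : V} (c : G.Walk v v) : Even c.length := by
  obtain ⟨C⟩ := hbip
  have := walk_parity C c
  have h0 : ((c.length : ZMod 2)) = 0 := by
    exact add_eq_right.mp this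
  have : (2 : ℕ) ∣ c.length := by
    rwa [ZMod.natCast_eq_zero_iff] at h0
  exact even_iff_two_dvd.mpr this

/-- product of dart signs times (-1)^(number of forward darts) -/
lemma dart_prod (o : G.Orientation) {u w : V} (p : G.Walk u w) :
    (p.darts.map (fun d => o.sign d.toProd.1 d.toProd.2)).prod *
      (-1 : ℤ) ^ ((p.darts.filter (fun d => o.sign d.toProd.1 d.toProd.2 = 1)).length)
      = (-1) ^ p.length := by
  induction p with
  | nil => simp
  | @cons u v w h q ih =>
    rcases o.adj u v h with hs | hs
    · rw [SimpleGraph.Walk.darts_cons, List.map_cons, List.prod_cons,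
        SimpleGraph.Walk.length_cons, List.filter_cons_of_pos (by simp [hs]),
        List.length_cons, pow_succ, pow_succ, hs]
      linear_combination (-1 : ℤ) * ih
    · rw [SimpleGraph.Walk.darts_cons, List.map_cons, List.prod_cons,
        SimpleGraph.Walk.length_cons, List.filter_cons_of_neg (by simp [hs]),
        pow_succ, hs]
      linear_combination (-1 : ℤ) * ih


lemma getElem_idx_congr {α : Type*} (l : List α) {i j : ℕ} (h : i = j) (hi : i < l.length) :
    l[i]'hi = l[j]'(h ▸ hi) := by subst h; rfl

/-- the only edge of a path ending at `w` that contains `w` is the last dart -/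
lemma edge_end_eq {u w : V} (p : G.Walk u w) (hp : p.support.Nodup) {x : V}
    (hx : s(x, w) ∈ p.edges) :
    ∃ d : G.Dart, p.darts.getLast? = some d ∧ d.toProd.1 = x := by
  induction p with
  | nil => simp at hx
  | @cons u v w h q ih =>
    rw [SimpleGraph.Walk.support_cons, List.nodup_cons] at hp
    rw [SimpleGraph.Walk.edges_cons, List.mem_cons] at hx
    rcases hx with hx | hx
    · rw [Sym2.eq_iff] at hx
      rcases hx with ⟨rfl, rfl⟩ | ⟨rfl, rfl⟩
      · -- u = x, v = w ; q : Walk w w with nodup support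
        cases q with
        | nil => exact ⟨_, rfl, rfl⟩
        | cons h' q' =>
          exfalso
          have h2 := hp.2
          rw [SimpleGraph.Walk.support_cons, List.nodup_cons] at h2
          exact h2.1 (SimpleGraph.Walk.end_mem_support q')
      · exact absurd (SimpleGraph.Walk.end_mem_support q) hp.1
    · obtain ⟨d, hd, heq⟩ := ih hp.2 hx
      refine ⟨d, ?_, heq⟩
      rw [SimpleGraph.Walk.darts_cons]
      rcases hq : q.darts with _ | ⟨e, es⟩
      · rw [hq] at hd; simp at hd
      · rw [hq] at hd
        rw [List.getLast?_cons_cons]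
        exact hd

lemma cycle_dropLast_nodup {v : V} {c : G.Walk v v} (hc : c.IsCycle) :
    c.support.dropLast.Nodup := by
  have htail : c.support.tail.Nodup := ((SimpleGraph.Walk.isCycle_def c).mp hc).2.2
  have hlen : c.support.tail.length = c.length := by
    have := c.length_support
    rcases h : c.support with _ | ⟨a, t⟩ <;> simp_all
  have hne : c.support.tail ≠ [] := by
    intro h
    rw [h] at hlen
    have := hc.three_le_length
    simp at hlen; omega
  rw [c.support_eq_cons, List.dropLast_cons_of_ne_nil hne, List.nodup_cons]
  constructor
  · intro hv
    have hv' : v ∈ c.support.tail.dropLast := hv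
    have : c.support.tail.getLast hne = v := by
      rw [List.getLast_tail]
      exact c.getLast_support
    have hsplit := List.dropLast_append_getLast hne
    rw [this] at hsplit
    have := htail
    rw [← hsplit, List.nodup_append] at this
    exact this.2.2 v hv' v (by simp) rfl
  · exact htail.sublist (List.dropLast_sublist _)

lemma formPerm_dropLast_dart [DecidableEq V] {v : V} (c : G.Walk v v) (hnd : c.support.dropLast.Nodup)
    {d : G.Dart} (hd : d ∈ c.darts) :
    c.support.dropLast.formPerm d.toProd.1 = d.toProd.2 := by
  obtain ⟨i, hi, rfl⟩ := List.getElem_of_mem hd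
  have hsl := c.length_support
  have hdl := c.length_darts
  have hL : c.support.dropLast.length = c.length := by
    simp [hsl]
  have hTL : c.support.tail.length = c.length := by
    rcases h : c.support with _ | ⟨a, t⟩ <;> simp_all
  have hiL : i < c.support.dropLast.length := by omega
  have h1 : c.support.dropLast[i]'hiL = (c.darts[i]'hi).toProd.1 := by
    exact (List.getElem_of_eq c.map_fst_darts.symm hiL).trans (List.getElem_map _)
  have h2 : c.support.tail[i]'(by omega) = (c.darts[i]'hi).toProd.2 := by
    exact (List.getElem_of_eq c.map_snd_darts.symm (by omega)).trans (List.getElem_map _)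
  rw [← h1, ← h2, List.formPerm_apply_getElem _ hnd i hiL]
  by_cases hcase : i + 1 < c.support.dropLast.length
  · rw [getElem_idx_congr _ (Nat.mod_eq_of_lt hcase)]
    rw [List.getElem_dropLast, List.getElem_tail]
  · have hie : (i + 1) % c.support.dropLast.length = 0 := by
      have : i + 1 = c.support.dropLast.length := by omega
      rw [this, Nat.mod_self]
    rw [getElem_idx_congr _ hie]
    have e0 : c.support.dropLast[0]'(by omega) = v :=
      (List.getElem_dropLast _).trans
        ((List.getElem_of_eq c.support_eq_cons (by simp [hsl])).trans (List.getElem_cons_zero _ _ _))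
    have eL : c.support.tail[i]'(by omega) = v := by
      have hgl := c.getLast_support
      rw [List.getLast_eq_getElem] at hgl
      refine (List.getElem_tail _).trans ?_
      refine Eq.trans ?_ hgl
      exact getElem_idx_congr _ (by omega) _
    rw [e0, eL]


variable [DecidableEq V]

/-- product of orientation signs over the support of a permutation -/
def permS (o : G.Orientation) (σ : Equiv.Perm V) [Fintype V] : ℤ :=
  ∏ x ∈ σ.support, o.sign x (σ x)

variable [Fintype V]

lemma cycle_walk_perm (hbip : G.Colorable 2) (o : G.Orientation) {v : V} (c : G.Walk v v)
    (hc : c.IsCycle) :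
    (∀ x, c.support.dropLast.formPerm x ≠ x → G.Adj x (c.support.dropLast.formPerm x)) ∧
    c.support.dropLast.formPerm.IsCycle ∧
    c.support.dropLast.formPerm.support.card = c.length ∧
    (((Equiv.Perm.sign c.support.dropLast.formPerm : ℤ) * permS o c.support.dropLast.formPerm
        = (-1) ^ c.support.dropLast.formPerm.support.card) ↔ o.OddlyOriented c) := by
  set σ := c.support.dropLast.formPerm with hσ
  have hnd := cycle_dropLast_nodup hc
  have hlen3 := hc.three_le_length
  have hL : c.support.dropLast.length = c.length := by
    simp [c.length_support]
  have h2 : 2 ≤ c.support.dropLast.length := by omega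
  have hsupp : σ.support = c.support.dropLast.toFinset := by
    apply List.support_formPerm_of_nodup _ hnd
    intro x hx
    have := congrArg List.length hx
    simp [hL] at this
    omega
  have hcard : σ.support.card = c.length := by
    rw [hsupp, List.toFinset_card_of_nodup hnd, hL]
  have hcyc : σ.IsCycle := List.isCycle_formPerm hnd h2
  have hcover : ∀ x, σ x ≠ x → G.Adj x (σ x) := by
    intro x hx
    have hmem : x ∈ c.support.dropLast := List.mem_of_formPerm_apply_ne hx
    rw [← c.map_fst_darts] at hmem
    obtain ⟨d, hd, rfl⟩ := List.mem_map.mp hmem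
    rw [formPerm_dropLast_dart c hnd hd]
    exact d.adj
  have hS : permS o σ = (c.darts.map (fun d => o.sign d.toProd.1 d.toProd.2)).prod := by
    rw [permS, hsupp, List.prod_toFinset _ hnd, ← c.map_fst_darts, List.map_map]
    apply congrArg
    apply List.map_congr_left
    intro d hd
    simp only [Function.comp_apply]
    rw [formPerm_dropLast_dart c hnd hd]
  refine ⟨hcover, hcyc, hcard, ?_⟩
  have hdp := dart_prod o c
  have heven : Even c.length := closed_walk_even hbip c
  have hsign : ((Equiv.Perm.sign σ : ℤˣ) : ℤ) = -(-1) ^ σ.support.card := by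
    rw [hcyc.sign]
    push_cast
    ring
  set DP := (c.darts.map (fun d => o.sign d.toProd.1 d.toProd.2)).prod with hDP
  set F := (c.darts.filter (fun d => o.sign d.toProd.1 d.toProd.2 = 1)).length with hF
  have hpow1 : ((-1 : ℤ) ^ c.length) = 1 := heven.neg_one_pow
  have hDPF : DP = (-1) ^ F := by
    have h1 : DP * ((-1 : ℤ) ^ F * (-1) ^ F) = (-1) ^ F := by
      rw [← mul_assoc, hdp, hpow1, one_mul]
    have h2 : ((-1 : ℤ) ^ F * (-1) ^ F) = 1 := by
      rw [← pow_add, ← two_mul, pow_mul]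
      norm_num
    rw [h2, mul_one] at h1
    exact h1
  rw [hsign, hS, hcard, hpow1, hDPF]
  unfold SimpleGraph.Orientation.OddlyOriented
  rw [← hF]
  constructor
  · intro hmul
    rcases Nat.even_or_odd F with hFe | hFo
    · exfalso
      rw [hFe.neg_one_pow] at hmul
      norm_num at hmul
    · exact hFo
  · intro hFo
    rw [hFo.neg_one_pow]
    ring


section Expand

variable (o : G.Orientation) [DecidableRel G.Adj]

/-- the per-permutation discrepancy -/
def Dterm (σ : Equiv.Perm V) : ℤ :=
  (∏ x ∈ σ.support, -(G.adjMatrix ℤ (σ x) x)) - ((Equiv.Perm.sign σ : ℤˣ) : ℤ) * permS o σ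

lemma evalProd (M : Matrix V V ℤ) (hdiag : ∀ i, M i i = 0) (σ : Equiv.Perm V) :
    ∏ i, M.charmatrix (σ i) i
      = C (∏ x ∈ σ.support, (-(M (σ x) x))) * X ^ (Fintype.card V - σ.support.card) := by
  rw [← Finset.prod_mul_prod_compl σ.support]
  congr 1
  · rw [map_prod]
    apply Finset.prod_congr rfl
    intro i hi
    rw [Matrix.charmatrix_apply_ne _ _ _ (Equiv.Perm.mem_support.mp hi), map_neg]
  · have : ∀ i ∈ σ.supportᶜ, M.charmatrix (σ i) i = X := by
      intro i hi
      have hfix : σ i = i := Equiv.Perm.notMem_support.mp (Finset.mem_compl.mp hi)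
      rw [hfix, Matrix.charmatrix_apply_eq, hdiag, map_zero, sub_zero]
    rw [Finset.prod_congr rfl this, Finset.prod_const, Finset.card_compl]

lemma adj_diag_zero : ∀ i, G.adjMatrix ℤ i i = 0 := by intro i; simp

lemma sign_diag_zero : ∀ i, (Matrix.of o.sign) i i = 0 := by
  intro i; exact o.not_adj i i (G.irrefl)

lemma per_expand :
    Matrix.permanent (G.adjMatrix ℤ).charmatrix
      = ∑ σ : Equiv.Perm V, C (∏ x ∈ σ.support, -(G.adjMatrix ℤ (σ x) x))
          * X ^ (Fintype.card V - σ.support.card) := by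
  unfold Matrix.permanent
  apply Finset.sum_congr rfl
  intro σ _
  exact evalProd _ adj_diag_zero σ

lemma det_expand :
    Matrix.charpoly (Matrix.of o.sign)
      = ∑ σ : Equiv.Perm V, C (((Equiv.Perm.sign σ : ℤˣ) : ℤ) * permS o σ)
          * X ^ (Fintype.card V - σ.support.card) := by
  rw [Matrix.charpoly, Matrix.det_apply]
  apply Finset.sum_congr rfl
  intro σ _
  rw [evalProd _ (sign_diag_zero o) σ]
  have hperm : (∏ x ∈ σ.support, -(Matrix.of o.sign (σ x) x)) = permS o σ := by
    apply Finset.prod_congr rfl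
    intro x _
    show -(o.sign (σ x) x) = o.sign x (σ x)
    rw [o.skew (σ x) x]; ring
  rw [hperm, Units.smul_def, zsmul_eq_mul, ← Polynomial.C_eq_intCast, map_mul, mul_assoc]
  norm_cast

lemma sub_expand :
    Matrix.permanent (G.adjMatrix ℤ).charmatrix - Matrix.charpoly (Matrix.of o.sign)
      = ∑ σ : Equiv.Perm V, C (Dterm o σ) * X ^ (Fintype.card V - σ.support.card) := by
  rw [per_expand, det_expand, ← Finset.sum_sub_distrib]
  apply Finset.sum_congr rfl
  intro σ _
  rw [Dterm, map_sub]
  ring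

lemma cover_prod (σ : Equiv.Perm V) (hcov : ∀ x, σ x ≠ x → G.Adj x (σ x)) :
    (∏ x ∈ σ.support, -(G.adjMatrix ℤ (σ x) x)) = (-1) ^ σ.support.card := by
  rw [← Finset.prod_const]
  apply Finset.prod_congr rfl
  intro x hx
  have hadj : G.Adj (σ x) x := (hcov x (Equiv.Perm.mem_support.mp hx)).symm
  simp [hadj]

lemma permS_unit (σ : Equiv.Perm V) (hcov : ∀ x, σ x ≠ x → G.Adj x (σ x)) :
    permS o σ = 1 ∨ permS o σ = -1 := by
  rw [← Int.isUnit_iff]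
  refine Finset.prod_induction _ IsUnit (fun a b => IsUnit.mul) isUnit_one ?_
  intro x hx
  rcases o.adj x (σ x) (hcov x (Equiv.Perm.mem_support.mp hx)) with h | h <;> simp [h]

lemma Dterm_cases (σ : Equiv.Perm V) :
    (-1 : ℤ) ^ σ.support.card * Dterm o σ = 0 ∨
    (-1 : ℤ) ^ σ.support.card * Dterm o σ = 2 := by
  by_cases hcov : ∀ x, σ x ≠ x → G.Adj x (σ x)
  · rw [Dterm, cover_prod σ hcov]
    rcases permS_unit o σ hcov with hs | hs <;>
    rcases Int.units_eq_one_or (Equiv.Perm.sign σ) with hg | hg <;>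
    rcases Nat.even_or_odd σ.support.card with hk | hk <;>
      rw [hs, hg, hk.neg_one_pow] <;> norm_num
  · push_neg at hcov
    obtain ⟨x, hx, hnadj⟩ := hcov
    have hP : (∏ y ∈ σ.support, -(G.adjMatrix ℤ (σ y) y)) = 0 := by
      apply Finset.prod_eq_zero (Equiv.Perm.mem_support.mpr hx)
      have : ¬ G.Adj (σ x) x := fun h => hnadj h.symm
      simp [this]
    have hSz : permS o σ = 0 := by
      apply Finset.prod_eq_zero (Equiv.Perm.mem_support.mpr hx)
      exact o.not_adj _ _ hnadj
    left
    rw [Dterm, hP, hSz]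
    ring

lemma Dterm_zero_iff (σ : Equiv.Perm V) :
    Dterm o σ = 0 ↔ ((∀ x, σ x ≠ x → G.Adj x (σ x)) →
      ((Equiv.Perm.sign σ : ℤˣ) : ℤ) * permS o σ = (-1) ^ σ.support.card) := by
  by_cases hcov : ∀ x, σ x ≠ x → G.Adj x (σ x)
  · rw [Dterm, cover_prod σ hcov, sub_eq_zero]
    constructor
    · intro h _; exact h.symm
    · intro h; exact (h hcov).symm
  · constructor
    · intro _ h; exact absurd h hcov
    · intro _
      push_neg at hcov
      obtain ⟨x, hx, hnadj⟩ := hcov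
      have hP : (∏ y ∈ σ.support, -(G.adjMatrix ℤ (σ y) y)) = 0 := by
        apply Finset.prod_eq_zero (Equiv.Perm.mem_support.mpr hx)
        have : ¬ G.Adj (σ x) x := fun h => hnadj h.symm
        simp [this]
      have hSz : permS o σ = 0 := by
        apply Finset.prod_eq_zero (Equiv.Perm.mem_support.mpr hx)
        exact o.not_adj _ _ hnadj
      rw [Dterm, hP, hSz]
      ring

end Expand


section Build

/-- build a walk from a chain of adjacent vertices -/
def mkWalk : (u w : V) → (l : List V) → List.Chain G.Adj u (l ++ [w]) → G.Walk u w
  | _, _, [], h => SimpleGraph.Walk.cons (List.chain_cons.mp h).1 SimpleGraph.Walk.nil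
  | _, w, a :: l, h =>
      SimpleGraph.Walk.cons (List.chain_cons.mp h).1 (mkWalk a w l (List.chain_cons.mp h).2)

lemma mkWalk_support : ∀ (u w : V) (l : List V) (h : List.Chain G.Adj u (l ++ [w])),
    (mkWalk u w l h).support = u :: (l ++ [w])
  | u, w, [], h => by simp [mkWalk]
  | u, w, a :: l, h => by
      simp [mkWalk, mkWalk_support a w l (List.chain_cons.mp h).2]

lemma mkWalk_isCycle (a b : V) (t : List V) (h : List.Chain G.Adj a ((b :: t) ++ [a]))
    (hnd : (a :: b :: t).Nodup) (ht : t ≠ []) :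
    (mkWalk a a (b :: t) h).IsCycle := by
  have ha : a ∉ b :: t := (List.nodup_cons.mp hnd).1
  have hbt : (b :: t).Nodup := (List.nodup_cons.mp hnd).2
  have hb : b ∉ t := (List.nodup_cons.mp hbt).1
  have htn : t.Nodup := (List.nodup_cons.mp hbt).2
  have hsub : mkWalk a a (b :: t) h
      = SimpleGraph.Walk.cons (List.chain_cons.mp h).1
          (mkWalk b a t (List.chain_cons.mp h).2) := rfl
  rw [hsub, SimpleGraph.Walk.cons_isCycle_iff]
  have hps : (mkWalk b a t (List.chain_cons.mp h).2).support = b :: (t ++ [a]) :=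
    mkWalk_support b a t (List.chain_cons.mp h).2
  have hnodup' : (mkWalk b a t (List.chain_cons.mp h).2).support.Nodup := by
    rw [hps]
    rw [List.nodup_cons, List.nodup_append]
    refine ⟨?_, htn, List.nodup_singleton a, ?_⟩
    · intro hmem
      rcases List.mem_append.mp hmem with hmem | hmem
      · exact hb hmem
      · simp at hmem
        subst hmem
        exact ha List.mem_cons_self
    · intro x hx y hy hxy
      simp at hy
      subst hy
      rw [hxy] at hx
      exact ha (List.mem_cons_of_mem _ hx)
  refine ⟨(SimpleGraph.Walk.isPath_def _).mpr hnodup', ?_⟩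
  intro hmem
  obtain ⟨d, hd, hfst⟩ := edge_end_eq _ hnodup' (by rwa [Sym2.eq_swap] at hmem)
  have hmap := (mkWalk b a t (List.chain_cons.mp h).2).map_fst_darts
  have hlast : ((mkWalk b a t (List.chain_cons.mp h).2).darts.map (·.toProd.1)).getLast?
      = some d.toProd.1 := by
    rw [List.getLast?_map, hd]
    rfl
  rw [hmap] at hlast
  have hdl : (mkWalk b a t (List.chain_cons.mp h).2).support.dropLast = b :: t := by
    rw [hps, ← List.cons_append, List.dropLast_concat]
  rw [hdl, hfst] at hlast
  rcases t with _ | ⟨t0, ts⟩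
  · exact ht rfl
  · rw [List.getLast?_cons_cons] at hlast
    exact hb (List.mem_of_mem_getLast? (by rw [hlast]; rfl))

end Build


section Bridge

variable (o : G.Orientation) [DecidableRel G.Adj]

lemma per_eq_det_iff_Dterm :
    Matrix.permanent (G.adjMatrix ℤ).charmatrix = Matrix.charpoly (Matrix.of o.sign) ↔
    ∀ σ : Equiv.Perm V, Dterm o σ = 0 := by
  constructor
  · intro h σ0
    have hsum0 : (∑ σ : Equiv.Perm V, C (Dterm o σ) * X ^ (Fintype.card V - σ.support.card))
        = 0 := by
      rw [← sub_expand o, h, sub_self]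
    have hcoeff := congrArg (fun p => Polynomial.coeff p (Fintype.card V - σ0.support.card)) hsum0
    simp only [Polynomial.finset_sum_coeff, Polynomial.coeff_zero] at hcoeff
    have hterm : ∀ σ : Equiv.Perm V,
        (C (Dterm o σ) * X ^ (Fintype.card V - σ.support.card)).coeff
            (Fintype.card V - σ0.support.card)
          = Dterm o σ * (if Fintype.card V - σ0.support.card
              = Fintype.card V - σ.support.card then 1 else 0) := by
      intro σ
      rw [Polynomial.coeff_C_mul, Polynomial.coeff_X_pow]
    rw [Finset.sum_congr rfl (fun σ _ => hterm σ)] at hcoeff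
    have hnonneg : ∀ σ ∈ (Finset.univ : Finset (Equiv.Perm V)),
        (0:ℤ) ≤ (-1) ^ σ0.support.card * (Dterm o σ *
          (if Fintype.card V - σ0.support.card = Fintype.card V - σ.support.card
            then 1 else 0)) := by
      intro σ _
      by_cases hcond : Fintype.card V - σ0.support.card = Fintype.card V - σ.support.card
      · have hk : σ.support.card = σ0.support.card := by
          have h1 := Finset.card_le_univ σ.support
          have h2 := Finset.card_le_univ σ0.support
          omega
        rw [if_pos hcond, mul_one, ← hk]
        rcases Dterm_cases o σ with hD | hD <;> rw [hD] <;> norm_num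
      · rw [if_neg hcond]
        simp
    have hall := (Finset.sum_eq_zero_iff_of_nonneg hnonneg).mp
      (by rw [← Finset.mul_sum, hcoeff, mul_zero]) σ0 (Finset.mem_univ _)
    rw [if_pos rfl, mul_one] at hall
    rcases mul_eq_zero.mp hall with hz | hz
    · exact absurd hz (pow_ne_zero _ (by norm_num))
    · exact hz
  · intro hD
    have : Matrix.permanent (G.adjMatrix ℤ).charmatrix - Matrix.charpoly (Matrix.of o.sign)
        = 0 := by
      rw [sub_expand o]
      apply Finset.sum_eq_zero
      intro σ _
      rw [hD σ, map_zero, zero_mul]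
    exact sub_eq_zero.mp this

end Bridge


section Backward

variable (o : G.Orientation) [DecidableRel G.Adj]

lemma cover_sign_prod (hbip : G.Colorable 2)
    (hall : ∀ (v : V) (c : G.Walk v v), c.IsCycle → o.OddlyOriented c)
    (σ : Equiv.Perm V) :
    (∀ x, σ x ≠ x → G.Adj x (σ x)) →
      ((Equiv.Perm.sign σ : ℤˣ) : ℤ) * permS o σ = (-1) ^ σ.support.card := by
  induction σ using Equiv.Perm.cycle_induction_on with
  | base_one =>
    intro _
    simp [permS]
  | base_cycles σ hσ =>
    intro hcov
    by_cases h2 : σ.support.card = 2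
    · obtain ⟨a, b, hab, rfl⟩ := Equiv.Perm.card_support_eq_two.mp h2
      have hadj : G.Adj a b := by
        have := hcov a (by rw [Equiv.swap_apply_left]; exact hab.symm)
        rwa [Equiv.swap_apply_left] at this
      have hsS : permS o (Equiv.swap a b) = -1 := by
        rw [permS, Equiv.Perm.support_swap hab, Finset.prod_pair hab,
          Equiv.swap_apply_left, Equiv.swap_apply_right]
        have := o.skew b a
        rcases o.adj a b hadj with h | h <;> rw [this, h] <;> ring_nf <;> norm_num [h]
      rw [hsS, Equiv.Perm.sign_swap hab, h2]
      norm_num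
    · have h3 : 3 ≤ σ.support.card := by
        have := hσ.two_le_card_support
        omega
      obtain ⟨a, ha⟩ := Finset.card_pos.mp (show 0 < σ.support.card by omega)
      have hane : σ a ≠ a := Equiv.Perm.mem_support.mp ha
      set l := σ.toList a with hl
      have hnl : l.Nodup := Equiv.Perm.nodup_toList σ a
      have hlen : l.length = σ.support.card := by
        rw [hl, Equiv.Perm.length_toList, hσ.cycleOf_eq hane]
      have hform : l.formPerm = σ := by
        rw [hl, Equiv.Perm.formPerm_toList, hσ.cycleOf_eq hane]
      have hlne : l ≠ [] := by
        intro h0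
        rw [h0] at hlen
        simp at hlen
        omega
      have hget : ∀ (i : ℕ) (hi : i < l.length), l[i] = (σ ^ i) a := by
        intro i hi
        have := Equiv.Perm.getElem_toList σ a i (by rwa [← hl])
        simpa using this
      have hhead : l.head hlne = a := by
        rw [List.head_eq_getElem, hget 0 (by simp [List.length_pos_iff.mpr hlne])]
        simp
      have hpowlen : (σ ^ l.length) a = a := by
        rw [hlen, ← hσ.orderOf, pow_orderOf_eq_one]
        rfl
      -- getElem values of l ++ [a]
      have hget' : ∀ (i : ℕ) (hi : i < (l ++ [a]).length), (l ++ [a])[i] = (σ ^ i) a := by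
        intro i hi
        rw [List.length_append, List.length_singleton] at hi
        by_cases hcase : i < l.length
        · rw [List.getElem_append_left hcase]
          exact hget i hcase
        · have hieq : i = l.length := by omega
          subst hieq
          rw [List.getElem_append_right (le_refl _)]
          simpa using hpowlen.symm
      have hchain' : List.Chain' G.Adj (l ++ [a]) := by
        refine List.isChain_iff_getElem.mpr ?_
        intro i hi
        rw [hget' i (by omega), hget' (i + 1) (by omega)]
        rw [pow_succ' σ i]
        have hmem : (σ ^ i) a ∈ σ.support := Equiv.Perm.pow_apply_mem_support.mpr ha
        exact hcov _ (Equiv.Perm.mem_support.mp hmem)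
      have hchain : List.Chain G.Adj a (l.tail ++ [a]) := by
        have : List.Chain' G.Adj (a :: (l.tail ++ [a])) := by
          rw [← List.cons_append]
          rw [show a :: l.tail = l from by rw [← hhead, List.cons_head_tail]]
          exact hchain'
        exact this
      set c := mkWalk a a l.tail hchain with hc
      have hcsupp : c.support = a :: (l.tail ++ [a]) := mkWalk_support a a l.tail hchain
      have hdrop : c.support.dropLast = l := by
        rw [hcsupp, ← List.cons_append, List.dropLast_concat, ← hhead, List.cons_head_tail]
      have hccyc : c.IsCycle := by
        rcases hlt : l.tail with _ | ⟨b, t⟩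
        · exfalso
          have := congrArg List.length (List.cons_head_tail hlne)
          rw [hlt] at this
          simp at this
          omega
        · have hndl : (a :: b :: t).Nodup := by
            rw [show a :: b :: t = l from by rw [← hhead, ← hlt, List.cons_head_tail]]
            exact hnl
          have htne : t ≠ [] := by
            intro h0
            have := congrArg List.length (List.cons_head_tail hlne)
            rw [hlt, h0] at this
            simp at this
            omega
          have : c = mkWalk a a (b :: t) (by rw [← hlt]; exact hchain) := by
            rw [hc]
            congr 1
          rw [this]
          exact mkWalk_isCycle a b t _ hndl htne
      have hmain := cycle_walk_perm hbip o c hccyc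
      rw [hdrop, hform] at hmain
      exact hmain.2.2.2.mpr (hall a c hccyc)
  | induction_disjoint σ τ hdisj hcycσ hPσ hPτ =>
    intro hcov
    have hds := Equiv.Perm.Disjoint.disjoint_support hdisj
    have hsm : (σ * τ).support = σ.support ∪ τ.support := hdisj.support_mul
    have hτfix : ∀ x ∈ σ.support, τ x = x := by
      intro x hx
      exact Equiv.Perm.notMem_support.mp (Finset.disjoint_left.mp hds hx)
    have hσfix : ∀ x ∈ τ.support, σ x = x := by
      intro x hx
      exact Equiv.Perm.notMem_support.mp (Finset.disjoint_right.mp hds hx)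
    have happσ : ∀ x ∈ σ.support, (σ * τ) x = σ x := by
      intro x hx
      rw [Equiv.Perm.mul_apply, hτfix x hx]
    have happτ : ∀ x ∈ τ.support, (σ * τ) x = τ x := by
      intro x hx
      rw [Equiv.Perm.mul_apply]
      exact hσfix _ (Equiv.Perm.apply_mem_support.mpr hx)
    have hcovσ : ∀ x, σ x ≠ x → G.Adj x (σ x) := by
      intro x hx
      have hxs : x ∈ σ.support := Equiv.Perm.mem_support.mpr hx
      have h1 := happσ x hxs
      have := hcov x (by rw [h1]; exact hx)
      rwa [h1] at this
    have hcovτ : ∀ x, τ x ≠ x → G.Adj x (τ x) := by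
      intro x hx
      have hxs : x ∈ τ.support := Equiv.Perm.mem_support.mpr hx
      have h1 := happτ x hxs
      have := hcov x (by rw [h1]; exact hx)
      rwa [h1] at this
    have hpermS : permS o (σ * τ) = permS o σ * permS o τ := by
      rw [permS, permS, permS, hsm, Finset.prod_union hds]
      congr 1
      · exact Finset.prod_congr rfl (fun x hx => by rw [happσ x hx])
      · exact Finset.prod_congr rfl (fun x hx => by rw [happτ x hx])
    have hcard : (σ * τ).support.card = σ.support.card + τ.support.card := by
      rw [hsm, Finset.card_union_of_disjoint hds]
    rw [hpermS, hcard, map_mul]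
    push_cast
    rw [pow_add]
    have e1 := hPσ hcovσ
    have e2 := hPτ hcovτ
    calc ((Equiv.Perm.sign σ : ℤˣ) : ℤ) * ((Equiv.Perm.sign τ : ℤˣ) : ℤ)
          * (permS o σ * permS o τ)
        = (((Equiv.Perm.sign σ : ℤˣ) : ℤ) * permS o σ)
          * (((Equiv.Perm.sign τ : ℤˣ) : ℤ) * permS o τ) := by ring
      _ = (-1) ^ σ.support.card * (-1) ^ τ.support.card := by rw [e1, e2]

end Backward

end Aux

theorem stmt_8 {V : Type*} [Fintype V] [DecidableEq V] (G : SimpleGraph V)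
    [DecidableRel G.Adj] (hbip : G.Colorable 2) (o : G.Orientation) :
    Matrix.permanent (G.adjMatrix ℤ).charmatrix = Matrix.charpoly (Matrix.of o.sign)
      ↔ ∀ (v : V) (c : G.Walk v v), c.IsCycle → o.OddlyOriented c := by
  rw [per_eq_det_iff_Dterm o]
  constructor
  · intro hD v c hc
    obtain ⟨hcov, hcyc, hcard, hiff⟩ := cycle_walk_perm hbip o c hc
    exact hiff.mp ((Dterm_zero_iff o _).mp (hD _) hcov)
  · intro hall σ
    rw [Dterm_zero_iff o σ]
    intro hcov
    exact cover_sign_prod o hbip hall σ hcov
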